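/- Let G : ℝⁿ → ℝ be separately additive and Borel measurable. Then G is separately linear: there exists c ∈ ℝ such that G(x₁,…,xₙ) = c · x₁ ⋯ xₙ. -/

import Mathlib

open MeasureTheory Pointwise

/-- Measurable solution of Cauchy functional equation is linear. -/
theorem additive_measurable_eq (f : ℝ → ℝ) (hf : ∀ x y, f (x + y) = f x + f y)
    (hm : Measurable f) : ∀ x, f x = x * f 1 := by
  set F : ℝ →+ ℝ := AddMonoidHom.mk' f (fun x y => hf x y) with hF
  suffices hc : Continuous f by
    intro x
    have := map_real_smul F hc x 1
    simpa [smul_eq_mul, hF] using this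
  apply continuous_of_continuousAt_zero F
  show ContinuousAt f 0
  have h0 : f 0 = 0 := map_zero F
  rw [ContinuousAt, h0, Metric.tendsto_nhds]
  intro ε hε
  rw [Filter.eventually_iff]
  have hδ : (0:ℝ) < ε / 2 := by linarith
  set δ := ε / 2 with hδdef
  set E : ℤ → Set ℝ := fun k => f ⁻¹' (Set.Ico (k * δ) ((k + 1) * δ)) with hE
  have hEm : ∀ k, MeasurableSet (E k) := fun k => hm measurableSet_Ico
  have hcover : (Set.univ : Set ℝ) ⊆ ⋃ k, E k := by
    intro x _
    refine Set.mem_iUnion.2 ⟨⌊f x / δ⌋, ?_, ?_⟩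
    · rw [← le_div_iff₀ hδ]; exact Int.floor_le _
    · rw [← div_lt_iff₀ hδ]; push_cast; exact Int.lt_floor_add_one _
  obtain ⟨k, hk⟩ : ∃ k : ℤ, 0 < volume (E k) := by
    by_contra h
    push_neg at h
    have h0' : ∀ k, volume (E k) = 0 := fun k => le_antisymm (h k) zero_le
    have : volume (⋃ k, E k) = 0 := measure_iUnion_null h0'
    have h2 : (⊤ : ENNReal) ≤ 0 := by
      rw [← Real.volume_univ, ← this]; exact measure_mono hcover
    simp at h2
  have hnhds : E k - E k ∈ nhds (0 : ℝ) :=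
    MeasureTheory.Measure.sub_mem_nhds_zero_of_addHaar_pos volume (E k) (hEm k) hk
  filter_upwards [hnhds] with z hz
  obtain ⟨x, hx, y, hy, rfl⟩ := hz
  have hfz : f (x - y) = f x - f y := map_sub F x y
  simp only [hE, Set.mem_preimage, Set.mem_Ico] at hx hy
  rw [Real.dist_eq, sub_zero, hfz, abs_sub_lt_iff]
  constructor <;> nlinarith [hx.1, hx.2, hy.1, hy.2]

/-- A separately additive, Borel measurable function `G : ℝⁿ → ℝ` is separately
linear: `G x = c * ∏ i, x i` for some `c`. -/
theorem separatelyAdditive_measurable_eq_mul_prod (n : ℕ) (G : (Fin n → ℝ) → ℝ)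
    (hadd : ∀ (i : Fin n) (a : Fin n → ℝ) (x y : ℝ),
      G (Function.update a i (x + y)) = G (Function.update a i x) + G (Function.update a i y))
    (hmeas : Measurable G) :
    ∃ c : ℝ, ∀ x : Fin n → ℝ, G x = c * ∏ i, x i := by
  have hlin : ∀ (i : Fin n) (a : Fin n → ℝ) (t : ℝ),
      G (Function.update a i t) = t * G (Function.update a i 1) := by
    intro i a t
    exact additive_measurable_eq (fun s => G (Function.update a i s))
      (fun x y => hadd i a x y) (hmeas.comp (measurable_update a)) t
  have key : ∀ s : Finset (Fin n), ∀ x : Fin n → ℝ,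
      G x = (∏ i ∈ s, x i) * G (fun j => if j ∈ s then 1 else x j) := by
    intro s
    induction s using Finset.induction_on with
    | empty => intro x; simp
    | @insert i s hi IH =>
      intro x
      have h1 : (fun j => if j ∈ s then (1:ℝ) else x j)
          = Function.update (fun j => if j ∈ s then (1:ℝ) else x j) i (x i) := by
        funext j
        rcases eq_or_ne j i with rfl | hj
        · simp [hi]
        · simp [Function.update_of_ne hj]
      have h2 : Function.update (fun j => if j ∈ s then (1:ℝ) else x j) i 1
          = fun j => if j ∈ insert i s then (1:ℝ) else x j := by
        funext j
        rcases eq_or_ne j i with rfl | hj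
        · simp
        · simp [Function.update_of_ne hj, hj]
      rw [IH x, h1, hlin i _ (x i), h2, Finset.prod_insert hi]
      ring
  refine ⟨G (fun _ => 1), fun x => ?_⟩
  have := key Finset.univ x
  simp only [Finset.mem_univ, if_true] at this
  rw [this]; ring
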